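/- arXiv:0811.1330 — 2 statements merged into one kernel-verified Lean document; each statement's English description precedes it below -/
import Mathlib

section
/- Let E be the exterior algebra over ℚ on z₁,…,z_m (degree 1). In E ⊗ E with the graded tensor product multiplication, the product ∏_{i=1}^m (1⊗z_i − z_i⊗1) is nonzero; consequently the zero-divisor cup length of E (the nilpotency length of the kernel of the multiplication map E ⊗ E → E) is at least m. -/
open TensorProduct

lemma aux_algebraMapInv_eq_zero (m : ℕ) {k : ℕ} {a : ExteriorAlgebra ℚ (Fin m → ℚ)}
    (ha : a ∈ (LinearMap.range (ExteriorAlgebra.ι ℚ :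
      (Fin m → ℚ) →ₗ[ℚ] ExteriorAlgebra ℚ (Fin m → ℚ))) ^ (k + 1)) :
    ExteriorAlgebra.algebraMapInv a = 0 := by
  rw [pow_succ] at ha
  refine Submodule.mul_induction_on ha (fun x _ y hy => ?_) (fun x y hx hy => by
    rw [map_add, hx, hy, add_zero])
  obtain ⟨v, rfl⟩ := hy
  rw [map_mul, ExteriorAlgebra.algebraMapInv, ExteriorAlgebra.lift_ι_apply]
  simp

lemma aux_prod_mem_pow {R A : Type*} [CommSemiring R] [Semiring A] [Algebra R A]
    (p : Submodule R A) : ∀ (l : List A), (∀ x ∈ l, x ∈ p) → l.prod ∈ p ^ l.length := by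
  intro l
  induction l with
  | nil => intro _; simpa [Submodule.one_eq_span] using Submodule.subset_span (Set.mem_singleton 1)
  | cons x l ih =>
    intro h
    rw [List.prod_cons, List.length_cons, pow_succ']
    exact Submodule.mul_mem_mul (h x List.mem_cons_self)
      (ih fun y hy => h y (List.mem_cons_of_mem x hy))

/-- Let `E` be the exterior algebra over `ℚ` on `z₁,…,z_m` (degree 1).  In the graded tensor
product `E ⊗ E`, the product `∏ᵢ (1⊗z_i − z_i⊗1)` is nonzero; consequently the zero-divisor
cup length of `E` — the nilpotency length of the kernel `Z` of the multiplication map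
`μ : E ⊗ E → E` (`μ(a⊗b) = ab`) — is at least `m`, i.e. `Z^m ≠ ⊥`. -/
theorem exterior_zcl_ge (m : ℕ)
    (z : Fin m → ExteriorAlgebra ℚ (Fin m → ℚ))
    (hz : ∀ i, z i = ExteriorAlgebra.ι ℚ (Pi.single i 1))
    (μ : ((fun i : ℕ => ⋀[ℚ]^i (Fin m → ℚ)) ᵍ⊗[ℚ] (fun i : ℕ => ⋀[ℚ]^i (Fin m → ℚ))) →ₐ[ℚ]
      ExteriorAlgebra ℚ (Fin m → ℚ))
    (hμ : ∀ a b : ExteriorAlgebra ℚ (Fin m → ℚ),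
      μ (GradedTensorProduct.tmul (𝒜 := fun i : ℕ => ⋀[ℚ]^i (Fin m → ℚ))
        (ℬ := fun i : ℕ => ⋀[ℚ]^i (Fin m → ℚ)) ℚ a b) = a * b) :
    ((List.finRange m).map (fun i =>
        GradedTensorProduct.tmul (𝒜 := fun i : ℕ => ⋀[ℚ]^i (Fin m → ℚ))
          (ℬ := fun i : ℕ => ⋀[ℚ]^i (Fin m → ℚ)) ℚ (1 : ExteriorAlgebra ℚ (Fin m → ℚ)) (z i) -
        GradedTensorProduct.tmul (𝒜 := fun i : ℕ => ⋀[ℚ]^i (Fin m → ℚ))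
          (ℬ := fun i : ℕ => ⋀[ℚ]^i (Fin m → ℚ)) ℚ (z i)
          (1 : ExteriorAlgebra ℚ (Fin m → ℚ)))).prod ≠ 0 ∧
      (LinearMap.ker μ.toLinearMap) ^ m ≠ ⊥ := by
  have hf : ∃ f : ExteriorAlgebra ℚ (Fin m → ℚ) →ₐ[ℚ] ExteriorAlgebra ℚ (Fin m → ℚ),
      f = (Algebra.ofId ℚ _).comp ExteriorAlgebra.algebraMapInv := ⟨_, rfl⟩
  obtain ⟨f, hf⟩ := hf
  have hcomm : ∀ ⦃i j : ℕ⦄ (a : ⋀[ℚ]^i (Fin m → ℚ)) (b : ⋀[ℚ]^j (Fin m → ℚ)),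
      f (a : ExteriorAlgebra ℚ (Fin m → ℚ)) *
          (AlgHom.id ℚ (ExteriorAlgebra ℚ (Fin m → ℚ))) (b : ExteriorAlgebra ℚ (Fin m → ℚ)) =
        (-1 : ℤˣ) ^ (j * i) • ((AlgHom.id ℚ (ExteriorAlgebra ℚ (Fin m → ℚ)))
          (b : ExteriorAlgebra ℚ (Fin m → ℚ)) * f (a : ExteriorAlgebra ℚ (Fin m → ℚ))) := by
    intro i j a b
    cases i with
    | zero =>
      rw [Nat.mul_zero, pow_zero, one_smul, AlgHom.id_apply, hf, AlgHom.comp_apply,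
        Algebra.ofId_apply]
      exact Algebra.commutes _ _
    | succ k =>
      have h0 : f (a : ExteriorAlgebra ℚ (Fin m → ℚ)) = 0 := by
        rw [hf, AlgHom.comp_apply, aux_algebraMapInv_eq_zero m a.2, map_zero]
      rw [h0, zero_mul, mul_zero, smul_zero]
  have hφ : ∃ φ : ((fun i : ℕ => ⋀[ℚ]^i (Fin m → ℚ)) ᵍ⊗[ℚ]
      (fun i : ℕ => ⋀[ℚ]^i (Fin m → ℚ))) →ₐ[ℚ] ExteriorAlgebra ℚ (Fin m → ℚ),
      φ = GradedTensorProduct.lift _ _ f (AlgHom.id ℚ _) hcomm := ⟨_, rfl⟩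
  obtain ⟨φ, hφ⟩ := hφ
  have hφt : ∀ a b : ExteriorAlgebra ℚ (Fin m → ℚ),
      φ (GradedTensorProduct.tmul (𝒜 := fun i : ℕ => ⋀[ℚ]^i (Fin m → ℚ))
        (ℬ := fun i : ℕ => ⋀[ℚ]^i (Fin m → ℚ)) ℚ a b) = f a * b := fun a b => by
    rw [hφ]; exact GradedTensorProduct.lift_tmul _ _ _ _ _ a b
  have hfz : ∀ i, f (z i) = 0 := by
    intro i
    rw [hz i, hf, AlgHom.comp_apply, ExteriorAlgebra.algebraMapInv,
      ExteriorAlgebra.lift_ι_apply]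
    simp
  have hφfac : ∀ i : Fin m, φ
      (GradedTensorProduct.tmul (𝒜 := fun i : ℕ => ⋀[ℚ]^i (Fin m → ℚ))
          (ℬ := fun i : ℕ => ⋀[ℚ]^i (Fin m → ℚ)) ℚ (1 : ExteriorAlgebra ℚ (Fin m → ℚ)) (z i) -
        GradedTensorProduct.tmul (𝒜 := fun i : ℕ => ⋀[ℚ]^i (Fin m → ℚ))
          (ℬ := fun i : ℕ => ⋀[ℚ]^i (Fin m → ℚ)) ℚ (z i)
          (1 : ExteriorAlgebra ℚ (Fin m → ℚ))) = z i := by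
    intro i
    rw [map_sub, hφt, hφt, map_one, one_mul, hfz, zero_mul, sub_zero]
  have hne : ((List.finRange m).map (fun i =>
      GradedTensorProduct.tmul (𝒜 := fun i : ℕ => ⋀[ℚ]^i (Fin m → ℚ))
        (ℬ := fun i : ℕ => ⋀[ℚ]^i (Fin m → ℚ)) ℚ (1 : ExteriorAlgebra ℚ (Fin m → ℚ)) (z i) -
      GradedTensorProduct.tmul (𝒜 := fun i : ℕ => ⋀[ℚ]^i (Fin m → ℚ))
        (ℬ := fun i : ℕ => ⋀[ℚ]^i (Fin m → ℚ)) ℚ (z i)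
        (1 : ExteriorAlgebra ℚ (Fin m → ℚ)))).prod ≠ 0 := by
    intro hcontra
    have h1 : φ (((List.finRange m).map (fun i =>
        GradedTensorProduct.tmul (𝒜 := fun i : ℕ => ⋀[ℚ]^i (Fin m → ℚ))
          (ℬ := fun i : ℕ => ⋀[ℚ]^i (Fin m → ℚ)) ℚ (1 : ExteriorAlgebra ℚ (Fin m → ℚ)) (z i) -
        GradedTensorProduct.tmul (𝒜 := fun i : ℕ => ⋀[ℚ]^i (Fin m → ℚ))
          (ℬ := fun i : ℕ => ⋀[ℚ]^i (Fin m → ℚ)) ℚ (z i)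
          (1 : ExteriorAlgebra ℚ (Fin m → ℚ)))).prod)
        = ((List.finRange m).map z).prod := by
      rw [map_list_prod, List.map_map]
      congr 1
      exact List.map_congr_left fun i _ => hφfac i
    have h2 : ((List.finRange m).map z).prod
        = ExteriorAlgebra.ιMulti ℚ m (fun i : Fin m => Pi.single i 1) := by
      rw [ExteriorAlgebra.ιMulti_apply, List.ofFn_eq_map]
      congr 1
      exact List.map_congr_left fun i _ => (hz i)
    have h4 : (fun i : Fin m => (Pi.single i 1 : Fin m → ℚ))
        = Matrix.of.symm (1 : Matrix (Fin m) (Fin m) ℚ) := by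
      ext i j
      simp [Matrix.one_apply, Pi.single_apply, eq_comm]
    have h3 : ExteriorAlgebra.liftAlternating
        (Pi.single m (Matrix.detRowAlternating : (Fin m → ℚ) [⋀^Fin m]→ₗ[ℚ] ℚ))
        (ExteriorAlgebra.ιMulti ℚ m (fun i : Fin m => Pi.single i 1)) = 1 := by
      rw [ExteriorAlgebra.liftAlternating_apply_ιMulti, Pi.single_eq_same, h4]
      exact Matrix.det_one
    rw [hcontra, map_zero, h2] at h1
    rw [← h1, map_zero] at h3
    exact one_ne_zero h3.symm
  refine ⟨hne, fun hcontra => ?_⟩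
  have hker : ∀ i : Fin m,
      (GradedTensorProduct.tmul (𝒜 := fun i : ℕ => ⋀[ℚ]^i (Fin m → ℚ))
          (ℬ := fun i : ℕ => ⋀[ℚ]^i (Fin m → ℚ)) ℚ (1 : ExteriorAlgebra ℚ (Fin m → ℚ)) (z i) -
        GradedTensorProduct.tmul (𝒜 := fun i : ℕ => ⋀[ℚ]^i (Fin m → ℚ))
          (ℬ := fun i : ℕ => ⋀[ℚ]^i (Fin m → ℚ)) ℚ (z i)
          (1 : ExteriorAlgebra ℚ (Fin m → ℚ))) ∈ LinearMap.ker μ.toLinearMap := by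
    intro i
    rw [LinearMap.mem_ker]
    show μ _ = 0
    rw [map_sub, hμ, hμ, one_mul, mul_one, sub_self]
  have hmem := aux_prod_mem_pow (LinearMap.ker μ.toLinearMap)
    ((List.finRange m).map (fun i =>
      GradedTensorProduct.tmul (𝒜 := fun i : ℕ => ⋀[ℚ]^i (Fin m → ℚ))
        (ℬ := fun i : ℕ => ⋀[ℚ]^i (Fin m → ℚ)) ℚ (1 : ExteriorAlgebra ℚ (Fin m → ℚ)) (z i) -
      GradedTensorProduct.tmul (𝒜 := fun i : ℕ => ⋀[ℚ]^i (Fin m → ℚ))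
        (ℬ := fun i : ℕ => ⋀[ℚ]^i (Fin m → ℚ)) ℚ (z i)
        (1 : ExteriorAlgebra ℚ (Fin m → ℚ))))
    (by
      intro x hx
      obtain ⟨i, _, rfl⟩ := List.mem_map.mp hx
      exact hker i)
  rw [List.length_map, List.length_finRange, hcontra, Submodule.mem_bot] at hmem
  exact hne hmem
end

section
/- Let A and B be graded ℚ-algebras with zero-divisor cup lengths zcl(A) and zcl(B) (the cup length of the kernel of the multiplication map A⊗A → A, resp. B⊗B → B). Then zcl(A ⊗ B) ≥ zcl(A) + zcl(B). -/
open TensorProduct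

set_option synthInstance.maxHeartbeats 400000
set_option maxHeartbeats 1000000

namespace ZclAux

lemma tmul_ne_zero {M N : Type*} [AddCommGroup M] [AddCommGroup N] [Module ℚ M] [Module ℚ N]
    {x : M} {y : N} (hx : x ≠ 0) (hy : y ≠ 0) : x ⊗ₜ[ℚ] y ≠ 0 := by
  obtain ⟨φ, hφ⟩ : ∃ φ : Module.Dual ℚ M, φ x ≠ 0 := by
    by_contra h
    push_neg at h
    exact hx ((Module.forall_dual_apply_eq_zero_iff ℚ x).mp h)
  obtain ⟨ψ, hψ⟩ : ∃ ψ : Module.Dual ℚ N, ψ y ≠ 0 := by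
    by_contra h
    push_neg at h
    exact hy ((Module.forall_dual_apply_eq_zero_iff ℚ y).mp h)
  intro h0
  have h1 : TensorProduct.map φ ψ (x ⊗ₜ[ℚ] y) = 0 := by rw [h0, map_zero]
  rw [TensorProduct.map_tmul] at h1
  have h2 := congrArg (TensorProduct.lid ℚ ℚ) h1
  rw [TensorProduct.lid_tmul, smul_eq_mul, LinearEquiv.map_zero] at h2
  exact mul_ne_zero hφ hψ h2

open GradedTensorProduct

variable {A B : Type} [Ring A] [Ring B] [Algebra ℚ A] [Algebra ℚ B]
  (𝒜 : ℕ → Submodule ℚ A) (ℬ : ℕ → Submodule ℚ B) [GradedAlgebra 𝒜] [GradedAlgebra ℬ]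
  (𝒞 : ℕ → Submodule ℚ (𝒜 ᵍ⊗[ℚ] ℬ)) [GradedAlgebra 𝒞]

section
variable (h𝒞 : ∀ (i j : ℕ) (a : A) (b : B), a ∈ 𝒜 i → b ∈ ℬ j →
      GradedTensorProduct.tmul (𝒜 := 𝒜) (ℬ := ℬ) ℚ a b ∈ 𝒞 (i + j))

/-- `a ⊗ 1` as an element of `𝒞 i`. -/
noncomputable def memL {i : ℕ} (a : 𝒜 i) : 𝒞 i :=
  ⟨(a : A) ᵍ⊗ₜ[ℚ] (1 : B), by
    have := h𝒞 i 0 a 1 a.2 (SetLike.one_mem_graded ℬ)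
    rwa [add_zero] at this⟩

/-- `1 ⊗ b` as an element of `𝒞 j`. -/
noncomputable def memR {j : ℕ} (b : ℬ j) : 𝒞 j :=
  ⟨(1 : A) ᵍ⊗ₜ[ℚ] (b : B), by
    have := h𝒞 0 j 1 b (SetLike.one_mem_graded 𝒜) b.2
    rwa [zero_add] at this⟩

/-- Left inclusion `𝒜 ᵍ⊗ 𝒜 → 𝒞 ᵍ⊗ 𝒞`. -/
noncomputable def fL : (𝒜 ᵍ⊗[ℚ] 𝒜) →ₐ[ℚ] (𝒞 ᵍ⊗[ℚ] 𝒞) :=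
  lift 𝒜 𝒜 ((includeLeft 𝒞 𝒞).comp (includeLeft 𝒜 ℬ))
    ((includeRight 𝒞 𝒞).comp (includeLeft 𝒜 ℬ))
    (fun i j a a' => by
      have h1 := tmul_one_mul_one_tmul (R := ℚ) 𝒞 𝒞
        ((a : A) ᵍ⊗ₜ[ℚ] (1 : B)) ((a' : A) ᵍ⊗ₜ[ℚ] (1 : B))
      have h2 := tmul_coe_mul_coe_tmul (R := ℚ) 𝒞 𝒞 (1 : 𝒜 ᵍ⊗[ℚ] ℬ)
        (memL 𝒜 ℬ 𝒞 h𝒞 a') (memL 𝒜 ℬ 𝒞 h𝒞 a) (1 : 𝒜 ᵍ⊗[ℚ] ℬ)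
      simp only [memL, Submodule.coe_mk] at h2
      simp only [AlgHom.comp_apply, includeLeft_apply, includeRight_apply]
      rw [h1, h2, one_mul, mul_one, smul_smul, Int.units_mul_self, one_smul])

/-- Right inclusion `ℬ ᵍ⊗ ℬ → 𝒞 ᵍ⊗ 𝒞`. -/
noncomputable def gR : (ℬ ᵍ⊗[ℚ] ℬ) →ₐ[ℚ] (𝒞 ᵍ⊗[ℚ] 𝒞) :=
  lift ℬ ℬ ((includeLeft 𝒞 𝒞).comp (includeRight 𝒜 ℬ))
    ((includeRight 𝒞 𝒞).comp (includeRight 𝒜 ℬ))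
    (fun i j b b' => by
      have h1 := tmul_one_mul_one_tmul (R := ℚ) 𝒞 𝒞
        ((1 : A) ᵍ⊗ₜ[ℚ] (b : B)) ((1 : A) ᵍ⊗ₜ[ℚ] (b' : B))
      have h2 := tmul_coe_mul_coe_tmul (R := ℚ) 𝒞 𝒞 (1 : 𝒜 ᵍ⊗[ℚ] ℬ)
        (memR 𝒜 ℬ 𝒞 h𝒞 b') (memR 𝒜 ℬ 𝒞 h𝒞 b) (1 : 𝒜 ᵍ⊗[ℚ] ℬ)
      simp only [memR, Submodule.coe_mk] at h2
      simp only [AlgHom.comp_apply, includeLeft_apply, includeRight_apply]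
      rw [h1, h2, one_mul, mul_one, smul_smul, Int.units_mul_self, one_smul])

lemma fL_tmul (a a' : A) :
    fL 𝒜 ℬ 𝒞 h𝒞 (a ᵍ⊗ₜ[ℚ] a') =
      ((a ᵍ⊗ₜ[ℚ] (1 : B)) ᵍ⊗ₜ[ℚ] (a' ᵍ⊗ₜ[ℚ] (1 : B)) : 𝒞 ᵍ⊗[ℚ] 𝒞) := by
  rw [fL, lift_tmul]
  simp only [AlgHom.comp_apply, includeLeft_apply, includeRight_apply]
  rw [tmul_one_mul_one_tmul]

lemma gR_tmul (b b' : B) :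
    gR 𝒜 ℬ 𝒞 h𝒞 (b ᵍ⊗ₜ[ℚ] b') =
      (((1 : A) ᵍ⊗ₜ[ℚ] b) ᵍ⊗ₜ[ℚ] ((1 : A) ᵍ⊗ₜ[ℚ] b') : 𝒞 ᵍ⊗[ℚ] 𝒞) := by
  rw [gR, lift_tmul]
  simp only [AlgHom.comp_apply, includeLeft_apply, includeRight_apply]
  rw [tmul_one_mul_one_tmul]

variable (μA : (𝒜 ᵍ⊗[ℚ] 𝒜) →ₐ[ℚ] A) (μB : (ℬ ᵍ⊗[ℚ] ℬ) →ₐ[ℚ] B)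
  (μC : (𝒞 ᵍ⊗[ℚ] 𝒞) →ₐ[ℚ] (𝒜 ᵍ⊗[ℚ] ℬ))

lemma muC_fL (hμA : ∀ a a' : A, μA (GradedTensorProduct.tmul (𝒜 := 𝒜) (ℬ := 𝒜) ℚ a a') = a * a')
    (hμC : ∀ c c' : 𝒜 ᵍ⊗[ℚ] ℬ,
      μC (GradedTensorProduct.tmul (𝒜 := 𝒞) (ℬ := 𝒞) ℚ c c') = c * c')
    (x : 𝒜 ᵍ⊗[ℚ] 𝒜) :
    μC (fL 𝒜 ℬ 𝒞 h𝒞 x) = includeLeft 𝒜 ℬ (μA x) := by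
  have key : ∀ X : A ⊗[ℚ] A,
      μC (fL 𝒜 ℬ 𝒞 h𝒞 (of ℚ 𝒜 𝒜 X)) = includeLeft 𝒜 ℬ (μA (of ℚ 𝒜 𝒜 X)) := by
    intro X
    induction X with
    | zero => simp only [map_zero]
    | tmul a a' =>
      have : of ℚ 𝒜 𝒜 (a ⊗ₜ[ℚ] a') = a ᵍ⊗ₜ[ℚ] a' := rfl
      rw [this, fL_tmul, hμC, hμA]
      exact (map_mul (includeLeftRingHom 𝒜 ℬ) a a').symm
    | add u v hu hv => simp only [map_add, hu, hv]
  have := key ((of ℚ 𝒜 𝒜).symm x)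
  rwa [symm_of_of] at this

lemma muC_gR (hμB : ∀ b b' : B, μB (GradedTensorProduct.tmul (𝒜 := ℬ) (ℬ := ℬ) ℚ b b') = b * b')
    (hμC : ∀ c c' : 𝒜 ᵍ⊗[ℚ] ℬ,
      μC (GradedTensorProduct.tmul (𝒜 := 𝒞) (ℬ := 𝒞) ℚ c c') = c * c')
    (y : ℬ ᵍ⊗[ℚ] ℬ) :
    μC (gR 𝒜 ℬ 𝒞 h𝒞 y) = includeRight 𝒜 ℬ (μB y) := by
  have key : ∀ Y : B ⊗[ℚ] B,
      μC (gR 𝒜 ℬ 𝒞 h𝒞 (of ℚ ℬ ℬ Y)) = includeRight 𝒜 ℬ (μB (of ℚ ℬ ℬ Y)) := by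
    intro Y
    induction Y with
    | zero => simp only [map_zero]
    | tmul b b' =>
      have : of ℚ ℬ ℬ (b ⊗ₜ[ℚ] b') = b ᵍ⊗ₜ[ℚ] b' := rfl
      rw [this, gR_tmul, hμC, hμB]
      exact (map_mul (includeRight 𝒜 ℬ) b b').symm
    | add u v hu hv => simp only [map_add, hu, hv]
  have := key ((of ℚ ℬ ℬ).symm y)
  rwa [symm_of_of] at this

/-- Signed commutation `A ⊗ B ≃ B ⊗ A` as plain linear equivalence. -/
noncomputable def cAB : A ⊗[ℚ] B ≃ₗ[ℚ] B ⊗[ℚ] A :=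
  (of ℚ 𝒜 ℬ) ≪≫ₗ (comm 𝒜 ℬ).toLinearEquiv ≪≫ₗ (of ℚ ℬ 𝒜).symm

/-- The signed shuffle `(A⊗A)⊗(B⊗B) ≃ (A⊗B)⊗(A⊗B) = 𝒞 ᵍ⊗ 𝒞`. -/
noncomputable def Etot : (A ⊗[ℚ] A) ⊗[ℚ] (B ⊗[ℚ] B) ≃ₗ[ℚ] (𝒞 ᵍ⊗[ℚ] 𝒞) :=
  (TensorProduct.assoc ℚ A A (B ⊗[ℚ] B)) ≪≫ₗ
  (TensorProduct.congr (LinearEquiv.refl ℚ A)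
    ((TensorProduct.assoc ℚ A B B).symm ≪≫ₗ
     TensorProduct.congr (cAB 𝒜 ℬ) (LinearEquiv.refl ℚ B) ≪≫ₗ
     TensorProduct.assoc ℚ B A B)) ≪≫ₗ
  (TensorProduct.assoc ℚ A B (A ⊗[ℚ] B)).symm ≪≫ₗ
  (TensorProduct.congr (of ℚ 𝒜 ℬ) (of ℚ 𝒜 ℬ)) ≪≫ₗ
  (of ℚ 𝒞 𝒞)

lemma key_homog (a : A) (b' : B) {k l : ℕ} (α : 𝒜 k) (β : ℬ l) :
    fL 𝒜 ℬ 𝒞 h𝒞 (a ᵍ⊗ₜ[ℚ] (α : A)) * gR 𝒜 ℬ 𝒞 h𝒞 ((β : B) ᵍ⊗ₜ[ℚ] b') =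
      Etot 𝒜 ℬ 𝒞 ((a ⊗ₜ[ℚ] (α : A)) ⊗ₜ[ℚ] ((β : B) ⊗ₜ[ℚ] b')) := by
  have hsL := tmul_coe_mul_coe_tmul (R := ℚ) 𝒞 𝒞 (a ᵍ⊗ₜ[ℚ] (1 : B))
    (memL 𝒜 ℬ 𝒞 h𝒞 α) (memR 𝒜 ℬ 𝒞 h𝒞 β) ((1 : A) ᵍ⊗ₜ[ℚ] b')
  simp only [memL, memR, Submodule.coe_mk] at hsL
  rw [fL_tmul, gR_tmul, hsL, tmul_one_mul_one_tmul, tmul_one_mul_one_tmul]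
  simp only [Etot, cAB, LinearEquiv.trans_apply, TensorProduct.assoc_tmul,
    TensorProduct.assoc_symm_tmul, TensorProduct.congr_tmul, LinearEquiv.refl_apply,
    AlgEquiv.toLinearEquiv_apply, comm_coe_tmul_coe]
  rw [@Units.smul_def _ _ (_) (_), @Units.smul_def _ _ (_) (_),
    ← Int.cast_smul_eq_zsmul ℚ, ← Int.cast_smul_eq_zsmul ℚ]
  rw [mul_comm k l]
  simp only [map_smul, TensorProduct.tmul_smul, TensorProduct.smul_tmul', of_symm_of,
    TensorProduct.assoc_tmul, TensorProduct.assoc_symm_tmul, TensorProduct.congr_tmul]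
  rfl

lemma key (x : 𝒜 ᵍ⊗[ℚ] 𝒜) (y : ℬ ᵍ⊗[ℚ] ℬ) :
    fL 𝒜 ℬ 𝒞 h𝒞 x * gR 𝒜 ℬ 𝒞 h𝒞 y =
      Etot 𝒜 ℬ 𝒞 ((of ℚ 𝒜 𝒜).symm x ⊗ₜ[ℚ] (of ℚ ℬ ℬ).symm y) := by
  have main : ∀ (a a' : A) (b b' : B),
      fL 𝒜 ℬ 𝒞 h𝒞 (a ᵍ⊗ₜ[ℚ] a') * gR 𝒜 ℬ 𝒞 h𝒞 (b ᵍ⊗ₜ[ℚ] b') =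
        Etot 𝒜 ℬ 𝒞 ((a ⊗ₜ[ℚ] a') ⊗ₜ[ℚ] (b ⊗ₜ[ℚ] b')) := by
    intro a a'
    induction a' using DirectSum.Decomposition.inductionOn 𝒜 with
    | zero =>
      intro b b'
      simp only [GradedTensorProduct.tmul, TensorProduct.tmul_zero, TensorProduct.zero_tmul, map_zero, zero_mul]
    | @homogeneous k α =>
      intro b
      induction b using DirectSum.Decomposition.inductionOn ℬ with
      | zero =>
        intro b'
        simp only [GradedTensorProduct.tmul, TensorProduct.tmul_zero, TensorProduct.zero_tmul, map_zero, mul_zero]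
      | @homogeneous l β =>
        intro b'
        exact key_homog 𝒜 ℬ 𝒞 h𝒞 a b' α β
      | add b₁ b₂ hb₁ hb₂ =>
        intro b'
        have e₁ := hb₁ b'
        have e₂ := hb₂ b'
        simp only [GradedTensorProduct.tmul] at e₁ e₂ ⊢
        simp only [TensorProduct.add_tmul, TensorProduct.tmul_add, map_add, mul_add, add_mul,
          e₁, e₂]
    | add a₁ a₂ ha₁ ha₂ =>
      intro b b'
      have e₁ := ha₁ b b'
      have e₂ := ha₂ b b'
      simp only [GradedTensorProduct.tmul] at e₁ e₂ ⊢
      simp only [TensorProduct.add_tmul, TensorProduct.tmul_add, map_add, mul_add, add_mul,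
        e₁, e₂]
  have red : ∀ (X : A ⊗[ℚ] A) (Y : B ⊗[ℚ] B),
      fL 𝒜 ℬ 𝒞 h𝒞 (of ℚ 𝒜 𝒜 X) * gR 𝒜 ℬ 𝒞 h𝒞 (of ℚ ℬ ℬ Y) =
        Etot 𝒜 ℬ 𝒞 (X ⊗ₜ[ℚ] Y) := by
    intro X Y
    induction X with
    | zero => simp only [map_zero, zero_mul, TensorProduct.zero_tmul]
    | tmul a a' =>
      induction Y with
      | zero => simp only [map_zero, mul_zero, TensorProduct.tmul_zero]
      | tmul b b' => exact main a a' b b'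
      | add u v hu hv =>
        simp only [map_add, mul_add, TensorProduct.tmul_add, hu, hv]
    | add u v hu hv =>
      simp only [map_add, add_mul, TensorProduct.add_tmul, hu, hv]
  have := red ((of ℚ 𝒜 𝒜).symm x) ((of ℚ ℬ ℬ).symm y)
  rwa [symm_of_of, symm_of_of] at this

end

end ZclAux

/-- Superadditivity of the zero-divisor cup length under (graded) tensor products:
if `zcl(A) ≥ p` and `zcl(B) ≥ q` (witnessed by zero divisors — elements of the kernel of
the multiplication map `μ_A : A ⊗ A → A`, resp. `μ_B` — with nonzero product), then
`zcl(A ⊗ B) ≥ p + q`.  Here `A ⊗ B` carries a grading `𝒞` compatible with those of `A` and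
`B`, and all tensor products are graded tensor products. -/
theorem zcl_tensor_superadditive {A B : Type} [Ring A] [Ring B] [Algebra ℚ A] [Algebra ℚ B]
    (𝒜 : ℕ → Submodule ℚ A) (ℬ : ℕ → Submodule ℚ B) [GradedAlgebra 𝒜] [GradedAlgebra ℬ]
    (𝒞 : ℕ → Submodule ℚ (𝒜 ᵍ⊗[ℚ] ℬ)) [GradedAlgebra 𝒞]
    (h𝒞 : ∀ (i j : ℕ) (a : A) (b : B), a ∈ 𝒜 i → b ∈ ℬ j →
      GradedTensorProduct.tmul (𝒜 := 𝒜) (ℬ := ℬ) ℚ a b ∈ 𝒞 (i + j))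
    (μA : (𝒜 ᵍ⊗[ℚ] 𝒜) →ₐ[ℚ] A)
    (hμA : ∀ a a' : A, μA (GradedTensorProduct.tmul (𝒜 := 𝒜) (ℬ := 𝒜) ℚ a a') = a * a')
    (μB : (ℬ ᵍ⊗[ℚ] ℬ) →ₐ[ℚ] B)
    (hμB : ∀ b b' : B, μB (GradedTensorProduct.tmul (𝒜 := ℬ) (ℬ := ℬ) ℚ b b') = b * b')
    (μC : (𝒞 ᵍ⊗[ℚ] 𝒞) →ₐ[ℚ] (𝒜 ᵍ⊗[ℚ] ℬ))
    (hμC : ∀ c c' : 𝒜 ᵍ⊗[ℚ] ℬ,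
      μC (GradedTensorProduct.tmul (𝒜 := 𝒞) (ℬ := 𝒞) ℚ c c') = c * c')
    (p q : ℕ)
    (hA : ∃ a : Fin p → (𝒜 ᵍ⊗[ℚ] 𝒜),
      (∀ i, μA (a i) = 0) ∧ ((List.finRange p).map a).prod ≠ 0)
    (hB : ∃ b : Fin q → (ℬ ᵍ⊗[ℚ] ℬ),
      (∀ i, μB (b i) = 0) ∧ ((List.finRange q).map b).prod ≠ 0) :
    ∃ c : Fin (p + q) → (𝒞 ᵍ⊗[ℚ] 𝒞),
      (∀ i, μC (c i) = 0) ∧ ((List.finRange (p + q)).map c).prod ≠ 0 := by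
  obtain ⟨a, ha0, haP⟩ := hA
  obtain ⟨b, hb0, hbP⟩ := hB
  refine ⟨Fin.append (fun i => ZclAux.fL 𝒜 ℬ 𝒞 h𝒞 (a i))
      (fun j => ZclAux.gR 𝒜 ℬ 𝒞 h𝒞 (b j)), ?_, ?_⟩
  · intro i
    refine Fin.addCases (fun i0 => ?_) (fun j0 => ?_) i
    · rw [Fin.append_left, ZclAux.muC_fL 𝒜 ℬ 𝒞 h𝒞 μA μC hμA hμC, ha0, map_zero]
    · rw [Fin.append_right, ZclAux.muC_gR 𝒜 ℬ 𝒞 h𝒞 μB μC hμB hμC, hb0, map_zero]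
  · have e1 : (List.map (fun i => ZclAux.fL 𝒜 ℬ 𝒞 h𝒞 (a i)) (List.finRange p)).prod
        = ZclAux.fL 𝒜 ℬ 𝒞 h𝒞 ((List.map a (List.finRange p)).prod) := by
      rw [map_list_prod (ZclAux.fL 𝒜 ℬ 𝒞 h𝒞), List.map_map]
      rfl
    have e2 : (List.map (fun j => ZclAux.gR 𝒜 ℬ 𝒞 h𝒞 (b j)) (List.finRange q)).prod
        = ZclAux.gR 𝒜 ℬ 𝒞 h𝒞 ((List.map b (List.finRange q)).prod) := by
      rw [map_list_prod (ZclAux.gR 𝒜 ℬ 𝒞 h𝒞), List.map_map]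
      rfl
    rw [← List.ofFn_eq_map, List.ofFn_fin_append, List.prod_append,
      List.ofFn_eq_map, List.ofFn_eq_map, e1, e2, ZclAux.key 𝒜 ℬ 𝒞 h𝒞]
    intro h0
    rw [LinearEquiv.map_eq_zero_iff] at h0
    refine ZclAux.tmul_ne_zero ?_ ?_ h0
    · simpa using haP
    · simpa using hbP
end
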